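/- Let $\mathcal{D}$ be a bounded sequence of integers $(d_k)_{k\ge 1}$ with every $d_k \ge 2$, let $(i,j)$ satisfy $0 < i,j < 1$ and $i+j=1$, let $R > 1$ be a real number, let $t \in \mathbb{N}$ with $t \ge 1$, and let $\rho_1$ and $c$ be positive reals satisfying $\rho_1 < \big(\tfrac{1}{4} R^{-2t/(1+j)}\big)^j$ and $c < \rho_1^{1/j}$. Then for every integer $k \ge 1$ and every closed interval $B \subset \mathbb{R}$ of radius (half-length) $\rho_1 R^{-t(k-1)}$, there is at most one point $P \in \mathcal{C}_{c,k}$ such that $\Delta_c(P) \cap B \neq \emptyset$. -/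

import Mathlib

/-- `Dprod d n = d 0 * d 1 * ... * d (n-1)`, i.e. the product of the first `n`
terms of the sequence `d` (so `Dprod d 0 = 1`). -/
def Dprod (d : ℕ → ℕ) (n : ℕ) : ℕ := ∏ k ∈ Finset.range n, d k

/-- The `𝒟`-adic pseudo absolute value `|q|_𝒟 = inf {1 / D_n : q ∈ D_n ℤ}`. -/
noncomputable def pseudoAbs (d : ℕ → ℕ) (q : ℕ) : ℝ :=
  sInf {x : ℝ | ∃ n : ℕ, Dprod d n ∣ q ∧ x = 1 / (Dprod d n : ℝ)}

/-- Distance from a real number to its nearest integer. -/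
noncomputable def distNearestInt (x : ℝ) : ℝ := |x - round x|

/-- The set of mixed `(i,j)`-badly approximable numbers `Bad_𝒟(i,j)`. -/
def BadD (d : ℕ → ℕ) (i j : ℝ) : Set ℝ :=
  {x : ℝ | ∃ c : ℝ, 0 < c ∧ ∀ q : ℕ, 0 < q →
    max (pseudoAbs d q ^ (1 / i)) (distNearestInt ((q : ℝ) * x) ^ (1 / j)) > c / (q : ℝ)}

/-- The interval `Δ_c(r/q) = {x : |x - r/q| ≤ c^j / q^{1+j}}`. -/
def Delta (c j : ℝ) (r : ℤ) (q : ℕ) : Set ℝ :=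
  {x : ℝ | |x - (r : ℝ) / (q : ℝ)| ≤ c ^ j / (q : ℝ) ^ (1 + j)}


set_option maxHeartbeats 1000000

lemma Dprod_pos (d : ℕ → ℕ) (hd2 : ∀ k, 2 ≤ d k) (n : ℕ) : 0 < Dprod d n :=
  Finset.prod_pos fun k _ => lt_of_lt_of_le two_pos (hd2 k)

lemma two_pow_le_Dprod (d : ℕ → ℕ) (hd2 : ∀ k, 2 ≤ d k) (n : ℕ) : 2 ^ n ≤ Dprod d n := by
  induction n with
  | zero => simp [Dprod]
  | succ n ih =>
    rw [Dprod, Finset.prod_range_succ, pow_succ]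
    exact Nat.mul_le_mul ih (hd2 n)

lemma Dprod_dvd (d : ℕ → ℕ) {m n : ℕ} (h : m ≤ n) : Dprod d m ∣ Dprod d n :=
  Finset.prod_dvd_prod_of_subset _ _ _ (Finset.range_subset_range.mpr h)

lemma pseudoAbs_attained (d : ℕ → ℕ) (hd2 : ∀ k, 2 ≤ d k) (q : ℕ) (hq : 0 < q)
    (b : ℝ) (hb : pseudoAbs d q ≤ b) :
    ∃ n : ℕ, Dprod d n ∣ q ∧ 1 / (Dprod d n : ℝ) ≤ b := by
  set S := {x : ℝ | ∃ n : ℕ, Dprod d n ∣ q ∧ x = 1 / (Dprod d n : ℝ)} with hS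
  have hne : S.Nonempty := ⟨1, 0, by simp [Dprod], by simp [Dprod]⟩
  have hfin : S.Finite := by
    apply Set.Finite.subset ((Set.finite_Iic q).image (fun n => 1 / (Dprod d n : ℝ)))
    rintro x ⟨n, hdvd, rfl⟩
    refine ⟨n, ?_, rfl⟩
    have h1 : n < 2 ^ n := Nat.lt_two_pow_self
    have h2 : Dprod d n ≤ q := Nat.le_of_dvd hq hdvd
    have := le_trans (two_pow_le_Dprod d hd2 n) h2
    exact le_of_lt (lt_of_lt_of_le h1 this)
  have hmem : sInf S ∈ S := hne.csInf_mem hfin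
  obtain ⟨n, hdvd, heq⟩ := hmem
  exact ⟨n, hdvd, by rw [← heq]; exact hb⟩

/-- Under the stated numerical conditions on `ρ₁` and `c`, for every `k ≥ 1` and every
closed interval `B` of radius `ρ₁ R^{-t(k-1)}`, at most one point `P ∈ 𝒞_{c,k}` has
`Δ_c(P) ∩ B ≠ ∅`. -/
theorem at_most_one_dangerous_point (d : ℕ → ℕ) (hd2 : ∀ k, 2 ≤ d k)
    (hdbdd : ∃ M, ∀ k, d k ≤ M)
    (i j : ℝ) (hi : 0 < i) (hi' : i < 1) (hj : 0 < j) (hj' : j < 1) (hij : i + j = 1)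
    (R : ℝ) (hR : 1 < R) (t : ℕ) (ht : 1 ≤ t) (ρ₁ c : ℝ) (hρ₁ : 0 < ρ₁) (hc : 0 < c)
    (hρ₁' : ρ₁ < (1 / 4 * R ^ (-(2 * (t : ℝ) / (1 + j)))) ^ j)
    (hc' : c < ρ₁ ^ (1 / j))
    (k : ℕ) (hk : 1 ≤ k) (z : ℝ)
    (r₁ r₂ : ℤ) (q₁ q₂ : ℕ) (hq₁ : 0 < q₁) (hq₂ : 0 < q₂)
    (hcop₁ : Int.gcd r₁ (q₁ : ℤ) = 1) (hcop₂ : Int.gcd r₂ (q₂ : ℤ) = 1)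
    (hC₁ : pseudoAbs d q₁ ≤ (c / (q₁ : ℝ)) ^ i) (hC₂ : pseudoAbs d q₂ ≤ (c / (q₂ : ℝ)) ^ i)
    (hlo₁ : R ^ (k - 1) ≤ (q₁ : ℝ) ^ ((1 + j) / (t : ℝ)))
    (hup₁ : (q₁ : ℝ) ^ ((1 + j) / (t : ℝ)) < R ^ k)
    (hlo₂ : R ^ (k - 1) ≤ (q₂ : ℝ) ^ ((1 + j) / (t : ℝ)))
    (hup₂ : (q₂ : ℝ) ^ ((1 + j) / (t : ℝ)) < R ^ k)
    (hmeet₁ : (Delta c j r₁ q₁ ∩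
      Set.Icc (z - ρ₁ / R ^ (t * (k - 1))) (z + ρ₁ / R ^ (t * (k - 1)))).Nonempty)
    (hmeet₂ : (Delta c j r₂ q₂ ∩
      Set.Icc (z - ρ₁ / R ^ (t * (k - 1))) (z + ρ₁ / R ^ (t * (k - 1)))).Nonempty) :
    (r₁ : ℝ) / (q₁ : ℝ) = (r₂ : ℝ) / (q₂ : ℝ) := by
  have hq₁R : (0:ℝ) < q₁ := by exact_mod_cast hq₁
  have hq₂R : (0:ℝ) < q₂ := by exact_mod_cast hq₂
  have hR0 : (0:ℝ) < R := lt_trans one_pos hR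
  have h1j : (0:ℝ) < 1 + j := by linarith only [hj]
  have htR : (0:ℝ) < (t:ℝ) := by exact_mod_cast ht
  have htne : (t:ℝ) ≠ 0 := htR.ne'
  have htn0 : t ≠ 0 := by omega
  have hRt0 : (0:ℝ) < R ^ (t * (k - 1)) := pow_pos hR0 _
  -- extract divisors
  obtain ⟨n₁, hdvd₁, hle₁⟩ := pseudoAbs_attained d hd2 q₁ hq₁ _ hC₁
  obtain ⟨n₂, hdvd₂, hle₂⟩ := pseudoAbs_attained d hd2 q₂ hq₂ _ hC₂
  set D := Dprod d (min n₁ n₂) with hDdef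
  have hD0 : 0 < D := Dprod_pos d hd2 _
  have hD0R : (0:ℝ) < D := by exact_mod_cast hD0
  have hDq₁ : D ∣ q₁ := (Dprod_dvd d (min_le_left n₁ n₂)).trans hdvd₁
  have hDq₂ : D ∣ q₂ := (Dprod_dvd d (min_le_right n₁ n₂)).trans hdvd₂
  have hci : (0:ℝ) < c ^ i := Real.rpow_pos_of_pos hc i
  -- (q/c)^i ≤ D_n bounds
  have hbound : ∀ (q : ℕ) (n : ℕ), 0 < q → (1 : ℝ) / (Dprod d n : ℝ) ≤ (c / q) ^ i →
      (q : ℝ) ^ i ≤ c ^ i * (Dprod d n : ℝ) := by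
    intro q n hq hle
    have hqR : (0:ℝ) < q := by exact_mod_cast hq
    have hDn : (0:ℝ) < (Dprod d n : ℝ) := by exact_mod_cast Dprod_pos d hd2 n
    rw [Real.div_rpow hc.le hqR.le] at hle
    rw [div_le_div_iff₀ hDn (Real.rpow_pos_of_pos hqR i)] at hle
    linarith only [hle]
  have hb₁ : (q₁ : ℝ) ^ i ≤ c ^ i * (Dprod d n₁ : ℝ) := hbound q₁ n₁ hq₁ hle₁
  have hb₂ : (q₂ : ℝ) ^ i ≤ c ^ i * (Dprod d n₂ : ℝ) := hbound q₂ n₂ hq₂ hle₂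
  -- lower bound on D in terms of min q
  set Q : ℝ := min (q₁ : ℝ) (q₂ : ℝ) with hQdef
  set M : ℝ := max (q₁ : ℝ) (q₂ : ℝ) with hMdef
  have hQ0 : 0 < Q := lt_min hq₁R hq₂R
  have hM0 : 0 < M := lt_of_lt_of_le hQ0 (min_le_max)
  have hQM : Q * M = (q₁ : ℝ) * q₂ := min_mul_max _ _
  have hQD : Q ^ i ≤ c ^ i * D := by
    rcases min_cases n₁ n₂ with ⟨hmeq, _⟩ | ⟨hmeq, _⟩
    · calc Q ^ i ≤ (q₁ : ℝ) ^ i := Real.rpow_le_rpow hQ0.le (min_le_left _ _) hi.le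
        _ ≤ c ^ i * (Dprod d n₁ : ℝ) := hb₁
        _ = c ^ i * D := by rw [hDdef, hmeq]
    · calc Q ^ i ≤ (q₂ : ℝ) ^ i := Real.rpow_le_rpow hQ0.le (min_le_right _ _) hi.le
        _ ≤ c ^ i * (Dprod d n₂ : ℝ) := hb₂
        _ = c ^ i * D := by rw [hDdef, hmeq]
  -- suppose not equal
  by_contra hne
  have hint : r₁ * (q₂ : ℤ) - r₂ * q₁ ≠ 0 := by
    intro h
    apply hne
    rw [div_eq_div_iff hq₁R.ne' hq₂R.ne']
    have : r₁ * (q₂ : ℤ) = r₂ * q₁ := by omega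
    exact_mod_cast this
  have hDdvd : (D : ℤ) ∣ r₁ * (q₂ : ℤ) - r₂ * q₁ :=
    dvd_sub (Dvd.dvd.mul_left (Int.natCast_dvd_natCast.mpr hDq₂) r₁)
      (Dvd.dvd.mul_left (Int.natCast_dvd_natCast.mpr hDq₁) r₂)
  have hDle : (D : ℤ) ≤ |r₁ * (q₂ : ℤ) - r₂ * q₁| :=
    Int.le_of_dvd (abs_pos.mpr hint) ((dvd_abs _ _).mpr hDdvd)
  -- gap lower bound
  have hgap : (D : ℝ) / ((q₁ : ℝ) * q₂) ≤ |(r₁ : ℝ) / q₁ - (r₂ : ℝ) / q₂| := by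
    have heq : (r₁ : ℝ) / q₁ - (r₂ : ℝ) / q₂ =
        ((r₁ * (q₂ : ℤ) - r₂ * q₁ : ℤ) : ℝ) / ((q₁ : ℝ) * q₂) := by
      field_simp
      push_cast
      ring
    have hDleR : (D : ℝ) ≤ |((r₁ * (q₂ : ℤ) - r₂ * q₁ : ℤ) : ℝ)| := by
      rw [← Int.cast_abs]; exact_mod_cast hDle
    rw [heq, abs_div, abs_of_pos (show (0:ℝ) < (q₁:ℝ)*q₂ by positivity)]
    gcongr
  -- power bounds on q₁, q₂
  have hpowlo : ∀ q : ℕ, 0 < q → R ^ (k - 1) ≤ (q : ℝ) ^ ((1 + j) / (t : ℝ)) →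
      R ^ (t * (k - 1)) ≤ (q : ℝ) ^ (1 + j) := by
    intro q hq hlo
    have hqR : (0:ℝ) < q := by exact_mod_cast hq
    have h := pow_le_pow_left₀ (pow_nonneg hR0.le _) hlo t
    rwa [← pow_mul, mul_comm (k-1) t, ← Real.rpow_natCast ((q:ℝ) ^ ((1+j)/(t:ℝ))) t,
      ← Real.rpow_mul hqR.le, div_mul_cancel₀ _ htne] at h
  have hpowup : ∀ q : ℕ, 0 < q → (q : ℝ) ^ ((1 + j) / (t : ℝ)) < R ^ k →
      (q : ℝ) ^ (1 + j) < R ^ (t * k) := by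
    intro q hq hup
    have hqR : (0:ℝ) < q := by exact_mod_cast hq
    have h := pow_lt_pow_left₀ hup (Real.rpow_nonneg hqR.le _) htn0
    rwa [← pow_mul, mul_comm k t, ← Real.rpow_natCast ((q:ℝ) ^ ((1+j)/(t:ℝ))) t,
      ← Real.rpow_mul hqR.le, div_mul_cancel₀ _ htne] at h
  have hq₁lo := hpowlo q₁ hq₁ hlo₁
  have hq₂lo := hpowlo q₂ hq₂ hlo₂
  have hq₁up := hpowup q₁ hq₁ hup₁
  have hq₂up := hpowup q₂ hq₂ hup₂
  -- c^j < ρ₁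
  have hcj : c ^ j < ρ₁ := by
    have h := Real.rpow_lt_rpow hc.le hc' hj
    rwa [← Real.rpow_mul hρ₁.le, one_div_mul_cancel hj.ne', Real.rpow_one] at h
  -- Delta radius bound
  have hrad : ∀ q : ℕ, 0 < q → R ^ (t * (k - 1)) ≤ (q : ℝ) ^ (1 + j) →
      c ^ j / (q : ℝ) ^ (1 + j) ≤ ρ₁ / R ^ (t * (k - 1)) := by
    intro q hq hqlo
    exact div_le_div₀ hρ₁.le hcj.le hRt0 hqlo
  -- distance upper bound from the two intersections
  obtain ⟨x₁, hx₁Δ, hx₁B⟩ := hmeet₁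
  obtain ⟨x₂, hx₂Δ, hx₂B⟩ := hmeet₂
  have hx₁Δ' : |x₁ - (r₁:ℝ)/q₁| ≤ c ^ j / (q₁:ℝ) ^ (1+j) := hx₁Δ
  have hx₂Δ' : |x₂ - (r₂:ℝ)/q₂| ≤ c ^ j / (q₂:ℝ) ^ (1+j) := hx₂Δ
  obtain ⟨hx₁l, hx₁r⟩ := hx₁B
  obtain ⟨hx₂l, hx₂r⟩ := hx₂B
  have hdist : |(r₁:ℝ)/q₁ - (r₂:ℝ)/q₂| ≤ 4 * (ρ₁ / R ^ (t*(k-1))) := by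
    have h1 := hrad q₁ hq₁ hq₁lo
    have h2 := hrad q₂ hq₂ hq₂lo
    have a1 := abs_le.mp hx₁Δ'
    have a2 := abs_le.mp hx₂Δ'
    rw [abs_le]
    constructor <;> linarith only [a1.1, a1.2, a2.1, a2.2, hx₁l, hx₁r, hx₂l, hx₂r, h1, h2]
  have hcomb : (D : ℝ) / ((q₁:ℝ)*q₂) ≤ 4 * (ρ₁ / R ^ (t*(k-1))) := hgap.trans hdist
  -- lower bound for D/(q₁ q₂)
  have hQj : Q ^ j ≤ M ^ j := Real.rpow_le_rpow hQ0.le min_le_max hj.le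
  have hM1j : M ^ (1+j) < R ^ (t*k) := by
    rcases max_cases (q₁:ℝ) (q₂:ℝ) with ⟨h, _⟩ | ⟨h, _⟩ <;> rw [hMdef, h] <;> assumption
  have hMsplit : M ^ ((1:ℝ)+j) = M * M ^ j := by
    rw [Real.rpow_add hM0, Real.rpow_one]
  have key1 : Q ^ j * M < R ^ (t*k) := by
    calc Q ^ j * M ≤ M ^ j * M := by
          exact mul_le_mul_of_nonneg_right hQj hM0.le
      _ = M ^ ((1:ℝ)+j) := by rw [hMsplit]; ring
      _ < R ^ (t*k) := hM1j
  have hQsplit : Q = Q ^ i * Q ^ j := by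
    rw [← Real.rpow_add hQ0, hij, Real.rpow_one]
  have hQi : (0:ℝ) < Q ^ i := Real.rpow_pos_of_pos hQ0 i
  have hQjpos : (0:ℝ) < Q ^ j := Real.rpow_pos_of_pos hQ0 j
  have hRtk : (0:ℝ) < R ^ (t*k) := pow_pos hR0 _
  have hlow : 1 / (c ^ i * R ^ (t*k)) < (D : ℝ) / ((q₁:ℝ)*q₂) := by
    rw [div_lt_div_iff₀ (by positivity) (by positivity), one_mul, ← hQM]
    have hQiQj : Q ^ i * Q ^ j = Q := by
      rw [← Real.rpow_add hQ0, hij, Real.rpow_one]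
    calc Q * M = Q ^ i * (Q ^ j * M) := by linear_combination (-M) * hQiQj
      _ < (c ^ i * D) * R ^ (t*k) := by
          apply mul_lt_mul' hQD key1 (by positivity) (by positivity)
      _ = (D:ℝ) * (c ^ i * R ^ (t*k)) := by ring
  have hchain : 1 / (c ^ i * R ^ (t*k)) < 4 * (ρ₁ / R ^ (t*(k-1))) := hlow.trans_le hcomb
  -- final numeric contradiction
  have hsplitk : R ^ (t*k) = R ^ (t*(k-1)) * R ^ t := by
    rw [← pow_add]
    congr 1
    cases k with
    | zero => omega
    | succ k => simp [Nat.mul_succ]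
  have hRt : (0:ℝ) < R ^ t := pow_pos hR0 t
  have ha : c ^ i < ρ₁ ^ (i/j) := by
    have h := Real.rpow_lt_rpow hc.le hc' hi
    rwa [← Real.rpow_mul hρ₁.le, div_mul_eq_mul_div, one_mul] at h
  have hb : ρ₁ * ρ₁ ^ (i/j) = ρ₁ ^ (1/j) := by
    have hx : (1:ℝ) + i/j = 1/j := by field_simp; linarith only [hij]
    calc ρ₁ * ρ₁ ^ (i/j) = ρ₁ ^ (1:ℝ) * ρ₁ ^ (i/j) := by rw [Real.rpow_one]
      _ = ρ₁ ^ ((1:ℝ) + i/j) := (Real.rpow_add hρ₁ _ _).symm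
      _ = ρ₁ ^ (1/j) := by rw [hx]
  have hcρ : ρ₁ ^ (1/j) < 1/4 * R ^ (-(2*(t:ℝ)/(1+j))) := by
    have hX : (0:ℝ) < 1/4 * R ^ (-(2*(t:ℝ)/(1+j))) := by positivity
    have h := Real.rpow_lt_rpow hρ₁.le hρ₁' (by positivity : (0:ℝ) < 1/j)
    rwa [← Real.rpow_mul hX.le, mul_one_div, div_self hj.ne', Real.rpow_one] at h
  have hfinal : R ^ (-(2*(t:ℝ)/(1+j))) * R ^ t ≤ 1 := by
    rw [← Real.rpow_natCast R t, ← Real.rpow_add hR0]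
    apply Real.rpow_le_one_of_one_le_of_nonpos hR.le
    have h2t : (t:ℝ) ≤ 2*(t:ℝ)/(1+j) := by
      rw [le_div_iff₀ h1j]
      have hjt : (t:ℝ)*j ≤ (t:ℝ)*1 := mul_le_mul_of_nonneg_left hj'.le htR.le
      linarith only [hjt]
    linarith only [h2t]
  have s1 : ρ₁ * c ^ i < ρ₁ ^ (1/j) := by
    calc ρ₁ * c ^ i < ρ₁ * ρ₁ ^ (i/j) := by
          exact mul_lt_mul_of_pos_left ha hρ₁
      _ = ρ₁ ^ (1/j) := hb
  have hsmall : 4 * ρ₁ * c ^ i * R ^ t < 1 := by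
    calc 4 * ρ₁ * c ^ i * R ^ t = 4 * (ρ₁ * c ^ i) * R ^ t := by ring
      _ < 4 * (ρ₁ ^ (1/j)) * R ^ t :=
          mul_lt_mul_of_pos_right (mul_lt_mul_of_pos_left s1 (by norm_num)) hRt
      _ < 4 * (1/4 * R ^ (-(2*(t:ℝ)/(1+j)))) * R ^ t :=
          mul_lt_mul_of_pos_right (mul_lt_mul_of_pos_left hcρ (by norm_num)) hRt
      _ = R ^ (-(2*(t:ℝ)/(1+j))) * R ^ t := by ring
      _ ≤ 1 := hfinal
  have hpos : (0:ℝ) < c ^ i * R ^ (t*k) := by positivity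
  have h1 : 1 / (c ^ i * R ^ (t*k)) < 4 * ρ₁ / R ^ (t*(k-1)) := by
    rw [mul_div_assoc]; exact hchain
  rw [div_lt_div_iff₀ hpos hRt0, one_mul, hsplitk] at h1
  have hprod := mul_lt_mul_of_pos_right hsmall hRt0
  linarith only [h1, hprod]
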